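/- Let p be a prime and n a positive integer. Let G be a group such that for every left 3-Engel element x ∈ G of order p, the normal closure ⟨x⟩^G has no element of order p^{n+1}. Suppose furthermore that for every left 3-Engel element x ∈ G of order p and every g ∈ ⟨x⟩^G of order dividing p^n, the subgroup ⟨x, x^g, x^{g²}, …, x^{g^{p^n − 1}}⟩ is nilpotent. Then for every left 3-Engel element x ∈ G of order p, every element of the normal closure ⟨x⟩^G has order a power of p (indeed order dividing p^n). -/

import Mathlib

/-- The paper's commutator `[g,h] = g⁻¹h⁻¹gh`. -/
def paperComm {G : Type*} [Group G] (g h : G) : G := g⁻¹ * h⁻¹ * g * h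

/-- `x` is a left 3-Engel element of `G`. -/
def IsLeftThreeEngel {G : Type*} [Group G] (x : G) : Prop :=
  ∀ g : G, paperComm (paperComm (paperComm g x) x) x = 1

open Subgroup



universe u

private lemma lcs_le_map_of_surj {K Q : Type*} [Group K] [Group Q] (f : K →* Q)
    (hf : Function.Surjective f) :
    ∀ m : ℕ, Subgroup.lowerCentralSeries (⊤ : Subgroup Q) m ≤ Subgroup.map f (Subgroup.lowerCentralSeries (⊤ : Subgroup K) m) := by
  intro m
  induction m with
  | zero =>
    intro q _
    obtain ⟨k, rfl⟩ := hf q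
    exact ⟨k, Subgroup.mem_top k, rfl⟩
  | succ m ih =>
    rw [Subgroup.lowerCentralSeries_succ, Subgroup.commutator_def]
    rw [Subgroup.closure_le]
    rintro q ⟨u, hu, v, -, rfl⟩
    obtain ⟨u', hu', rfl⟩ := ih hu
    obtain ⟨v', rfl⟩ := hf v
    refine ⟨u' * v' * u'⁻¹ * v'⁻¹, ?_, by simp [commutatorElement_def]⟩
    rw [Subgroup.lowerCentralSeries_succ, Subgroup.commutator_def]
    exact Subgroup.subset_closure ⟨u', hu', v', Subgroup.mem_top v', rfl⟩

private lemma ppow_torsion_of_nilpotent (p : ℕ) :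
    ∀ (c : ℕ) (K : Type u) (_ : Group K) (S : Set K),
      Subgroup.lowerCentralSeries (⊤ : Subgroup K) c = ⊥ → Subgroup.closure S = ⊤ →
      (∀ s ∈ S, ∃ k : ℕ, s ^ p ^ k = 1) → ∀ g : K, ∃ k : ℕ, g ^ p ^ k = 1 := by
  intro c
  induction c with
  | zero =>
    intro K _ S hc _ _ g
    have hg : g ∈ Subgroup.lowerCentralSeries (⊤ : Subgroup K) 0 := by
      rw [Subgroup.lowerCentralSeries_zero]; exact Subgroup.mem_top g
    rw [hc, Subgroup.mem_bot] at hg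
    exact ⟨0, by simp [hg]⟩
  | succ c ih =>
    intro K _ S hbot hgen hS
    -- the `c`-th term of the lower central series is central
    have hA_central : Subgroup.lowerCentralSeries (⊤ : Subgroup K) c ≤ Subgroup.center K := by
      intro a ha
      rw [Subgroup.mem_center_iff]
      intro g
      have hmem : a * g * a⁻¹ * g⁻¹ ∈ Subgroup.lowerCentralSeries (⊤ : Subgroup K) (c + 1) := by
        rw [Subgroup.lowerCentralSeries_succ, Subgroup.commutator_def]
        exact Subgroup.subset_closure ⟨a, ha, g, Subgroup.mem_top g, rfl⟩
      rw [hbot, Subgroup.mem_bot] at hmem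
      have : a * g = g * a := by
        have := congrArg (fun z => z * g * a) hmem
        simpa [mul_assoc] using this
      exact this.symm
    rcases c with _ | c'
    · -- `c = 0` : the group is abelian
      have hcomm : ∀ a b : K, Commute a b := fun a b =>
        (Subgroup.mem_center_iff.mp
          (hA_central (by rw [Subgroup.lowerCentralSeries_zero]; exact Subgroup.mem_top a)) b).symm
      intro g
      have hg : g ∈ Subgroup.closure S := by rw [hgen]; exact Subgroup.mem_top g
      refine Subgroup.closure_induction hS ⟨0, by simp⟩ ?_ ?_ hg
      · intro a b _ _ hka hkb
        obtain ⟨k, hk⟩ := hka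
        obtain ⟨l, hl⟩ := hkb
        refine ⟨k + l, ?_⟩
        rw [pow_add, pow_mul, (hcomm a b).mul_pow, hk, one_mul, ← pow_mul,
          mul_comm (p ^ k) (p ^ l), pow_mul, hl, one_pow]
      · intro a _ hka
        obtain ⟨k, hk⟩ := hka
        exact ⟨k, by rw [inv_pow, hk, inv_one]⟩
    · -- `c = c' + 1`
      set f := QuotientGroup.mk' (Subgroup.lowerCentralSeries (⊤ : Subgroup K) (c' + 1)) with hf
      have hfs : Function.Surjective f := QuotientGroup.mk'_surjective _
      have hQbot :
          Subgroup.lowerCentralSeries (⊤ : Subgroup (K ⧸ Subgroup.lowerCentralSeries (⊤ : Subgroup K) (c' + 1))) (c' + 1) = ⊥ := by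
        apply le_bot_iff.mp
        refine le_trans (lcs_le_map_of_surj f hfs (c' + 1)) ?_
        refine le_of_eq ((Subgroup.map_eq_bot_iff _).mpr ?_)
        rw [QuotientGroup.ker_mk']
      have hQgen : Subgroup.closure (f '' S) = ⊤ := by
        rw [← MonoidHom.map_closure, hgen, Subgroup.map_top_of_surjective f hfs]
      have hQS : ∀ s ∈ f '' S, ∃ k : ℕ, s ^ p ^ k = 1 := by
        rintro _ ⟨s, hs, rfl⟩
        obtain ⟨k, hk⟩ := hS s hs
        exact ⟨k, by rw [← map_pow, hk, map_one]⟩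
      have hQ := ih _ inferInstance (f '' S) hQbot hQgen hQS
      have hmodA : ∀ v : K, ∃ k : ℕ, v ^ p ^ k ∈ Subgroup.lowerCentralSeries (⊤ : Subgroup K) (c' + 1) := by
        intro v
        obtain ⟨k, hk⟩ := hQ (f v)
        refine ⟨k, ?_⟩
        have h1 : f (v ^ p ^ k) = 1 := by rw [map_pow, hk]
        exact (QuotientGroup.eq_one_iff _).mp h1
      have pA : ∀ a ∈ Subgroup.lowerCentralSeries (⊤ : Subgroup K) (c' + 1), ∃ k : ℕ, a ^ p ^ k = 1 := by
        intro a ha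
        rw [Subgroup.lowerCentralSeries_succ, Subgroup.commutator_def] at ha
        refine Subgroup.closure_induction ?_ ⟨0, by simp⟩ ?_ ?_ ha
        · rintro z ⟨u, hu, v, -, rfl⟩
          have hcent : ∀ w : K, u * w * u⁻¹ * w⁻¹ ∈ Subgroup.center K := by
            intro w
            apply hA_central
            rw [Subgroup.lowerCentralSeries_succ, Subgroup.commutator_def]
            exact Subgroup.subset_closure ⟨u, hu, w, Subgroup.mem_top w, rfl⟩
          have hmul : ∀ v w : K, u * (v * w) * u⁻¹ * (v * w)⁻¹ =
              (u * v * u⁻¹ * v⁻¹) * (u * w * u⁻¹ * w⁻¹) := by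
            intro v w
            have h1 : u * (v * w) * u⁻¹ * (v * w)⁻¹ =
                (u * v * u⁻¹ * v⁻¹) * (v * (u * w * u⁻¹ * w⁻¹) * v⁻¹) := by group
            have h2 : v * (u * w * u⁻¹ * w⁻¹) = (u * w * u⁻¹ * w⁻¹) * v :=
              Subgroup.mem_center_iff.mp (hcent w) v
            rw [h1, h2]; group
          have hpow : ∀ (m : ℕ) (v : K), u * v ^ m * u⁻¹ * (v ^ m)⁻¹ =
              (u * v * u⁻¹ * v⁻¹) ^ m := by
            intro m
            induction m with
            | zero => intro v; simp
            | succ m ihm =>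
              intro v
              rw [pow_succ, hmul (v ^ m) v, ihm v, ← pow_succ]
          obtain ⟨k, hk⟩ := hmodA v
          refine ⟨k, ?_⟩
          rw [commutatorElement_def, ← hpow]
          have hz : u * v ^ p ^ k = v ^ p ^ k * u :=
            Subgroup.mem_center_iff.mp (hA_central hk) u
          rw [hz]; group
        · intro a b ha' hb' hka hkb
          obtain ⟨k, hk⟩ := hka
          obtain ⟨l, hl⟩ := hkb
          have hac : a ∈ Subgroup.center K := by
            apply hA_central; rw [Subgroup.lowerCentralSeries_succ, Subgroup.commutator_def]; exact ha'
          have hcomm : Commute a b := (Subgroup.mem_center_iff.mp hac b).symm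
          refine ⟨k + l, ?_⟩
          rw [pow_add, pow_mul, hcomm.mul_pow, hk, one_mul, ← pow_mul,
            mul_comm (p ^ k) (p ^ l), pow_mul, hl, one_pow]
        · intro a _ hka
          obtain ⟨k, hk⟩ := hka
          exact ⟨k, by rw [inv_pow, hk, inv_one]⟩
      intro g
      obtain ⟨k, hk⟩ := hmodA g
      obtain ⟨l, hl⟩ := pA _ hk
      exact ⟨k + l, by rw [pow_add, pow_mul, hl]⟩


private lemma step_lemma {G : Type u} [Group G] (p n : ℕ) (hp : p.Prime)
    (x' : G) (hxo : orderOf x' = p)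
    (y' : G) (hy'm : y' ∈ Subgroup.normalClosure ({x'} : Set G)) (hy' : orderOf y' ∣ p ^ n)
    (hnil : Group.IsNilpotent
      ↥(Subgroup.closure {y : G | ∃ i < p ^ n, y = (y' ^ i)⁻¹ * x' * y' ^ i}))
    (hno' : ∀ z ∈ Subgroup.normalClosure ({x'} : Set G), orderOf z ≠ p ^ (n + 1))
    (e : G) (he : e = x' ∨ e = x'⁻¹) :
    orderOf (e * y') ∣ p ^ n := by
  have hppos : 0 < p ^ n := pow_pos hp.pos n
  set T : Set G := {y : G | ∃ i < p ^ n, y = (y' ^ i)⁻¹ * x' * y' ^ i} with hT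
  set N : Subgroup G := Subgroup.closure T with hN
  have hy'pow : y' ^ p ^ n = 1 := orderOf_dvd_iff_pow_eq_one.mp hy'
  have hx'T : x' ∈ T := ⟨0, hppos, by simp⟩
  have heN : e ∈ N := by
    rcases he with rfl | rfl
    · exact subset_closure hx'T
    · exact inv_mem (subset_closure hx'T)
  have hymod : ∀ m : ℕ, y' ^ m = y' ^ (m % p ^ n) := by
    intro m
    conv_lhs => rw [← Nat.div_add_mod m (p ^ n)]
    rw [pow_add, pow_mul, hy'pow, one_pow, one_mul]
  have hnorm : ∀ w ∈ N, y' * w * y'⁻¹ ∈ N := by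
    intro w hw
    refine Subgroup.closure_induction ?_ (by simpa using one_mem N) ?_ ?_ hw
    · rintro z ⟨i, hi, rfl⟩
      set j := (i + (p ^ n - 1)) % p ^ n with hj
      have hjlt : j < p ^ n := Nat.mod_lt _ hppos
      have hij : y' ^ (j + 1) = y' ^ i := by
        rw [hymod (j + 1), hj, Nat.mod_add_mod,
          (by omega : i + (p ^ n - 1) + 1 = i + p ^ n),
          Nat.add_mod_right, Nat.mod_eq_of_lt hi]
      have h2 : y' ^ j = y' ^ i * y'⁻¹ := by
        rw [← hij, pow_succ, mul_inv_cancel_right]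
      have h3 : y' * ((y' ^ i)⁻¹ * x' * y' ^ i) * y'⁻¹ = (y' ^ j)⁻¹ * x' * y' ^ j := by
        rw [h2]; group
      rw [h3]
      exact subset_closure ⟨j, hjlt, rfl⟩
    · intro a b _ _ hya hyb
      have h4 : y' * (a * b) * y'⁻¹ = y' * a * y'⁻¹ * (y' * b * y'⁻¹) := by group
      rw [h4]; exact mul_mem hya hyb
    · intro a _ hya
      have h5 : y' * a⁻¹ * y'⁻¹ = (y' * a * y'⁻¹)⁻¹ := by group
      rw [h5]; exact inv_mem hya
  have hkey : ∀ k : ℕ, ∃ w ∈ N, (e * y') ^ k = w * y' ^ k := by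
    intro k
    induction k with
    | zero => exact ⟨1, one_mem N, by simp⟩
    | succ k ihk =>
      obtain ⟨w, hwN, hwe⟩ := ihk
      refine ⟨e * (y' * w * y'⁻¹), mul_mem heN (hnorm w hwN), ?_⟩
      rw [pow_succ' (e * y'), hwe, pow_succ' y']
      group
  obtain ⟨w, hwN, hwe⟩ := hkey (p ^ n)
  rw [hy'pow, mul_one] at hwe
  obtain ⟨c, hc⟩ := Subgroup.nilpotent_iff_lowerCentralSeries.mp hnil
  have hgen : Subgroup.closure (((↑) : ↥N → G) ⁻¹' T) = ⊤ :=
    Subgroup.closure_closure_coe_preimage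
  have hgenT : ∀ s ∈ (((↑) : ↥N → G) ⁻¹' T), ∃ k : ℕ, s ^ p ^ k = 1 := by
    rintro s ⟨i, hi, hs⟩
    refine ⟨1, Subtype.ext ?_⟩
    have hcp : ((y' ^ i)⁻¹ * x' * y' ^ i) ^ p = (y' ^ i)⁻¹ * x' ^ p * y' ^ i := by
      have := conj_pow (i := p) (a := (y' ^ i)⁻¹) (b := x')
      simpa [inv_inv] using this
    have hxp : x' ^ p = 1 := by rw [← hxo, pow_orderOf_eq_one]
    push_cast [pow_one]
    rw [hs, hcp, hxp, mul_one, inv_mul_cancel]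
  have htor := ppow_torsion_of_nilpotent p c ↥N inferInstance _ hc hgen hgenT
  obtain ⟨k, hk⟩ := htor ⟨w, hwN⟩
  have hwtor : w ^ p ^ k = 1 := by
    have := congrArg (Subtype.val) hk
    simpa using this
  have hord : orderOf (e * y') ∣ p ^ (n + k) := by
    apply orderOf_dvd_of_pow_eq_one
    rw [pow_add, pow_mul, hwe, hwtor]
  obtain ⟨m, hmle, hm⟩ := (Nat.dvd_prime_pow hp).mp hord
  by_cases hmn : m ≤ n
  · rw [hm]; exact pow_dvd_pow p hmn
  · exfalso
    push_neg at hmn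
    have hx'm : x' ∈ Subgroup.normalClosure ({x'} : Set G) := subset_normalClosure rfl
    have hymem : e * y' ∈ Subgroup.normalClosure ({x'} : Set G) := by
      rcases he with rfl | rfl
      · exact mul_mem hx'm hy'm
      · exact mul_mem (inv_mem hx'm) hy'm
    have hzmem : (e * y') ^ p ^ (m - n - 1) ∈ Subgroup.normalClosure ({x'} : Set G) :=
      pow_mem hymem _
    have hzord : orderOf ((e * y') ^ p ^ (m - n - 1)) = p ^ (n + 1) := by
      rw [orderOf_pow_of_dvd (pow_ne_zero _ hp.ne_zero) (by rw [hm]; exact pow_dvd_pow p (by omega)),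
        hm, Nat.pow_div (by omega) hp.pos, (by omega : m - (m - n - 1) = n + 1)]
    exact hno' _ hzmem hzord



private lemma paperComm_conj {G : Type*} [Group G] (c g a : G) :
    paperComm (c * g * c⁻¹) (c * a * c⁻¹) = c * paperComm g a * c⁻¹ := by
  unfold paperComm; group

private lemma engel_conj {G : Type*} [Group G] {x : G} (hx : IsLeftThreeEngel x) (c : G) :
    IsLeftThreeEngel (c * x * c⁻¹) := by
  intro g
  have hg : g = c * (c⁻¹ * g * c) * c⁻¹ := by group
  rw [hg, paperComm_conj, paperComm_conj, paperComm_conj, hx (c⁻¹ * g * c)]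
  group

private lemma orderOf_conj' {G : Type*} [Group G] (c a : G) :
    orderOf (c * a * c⁻¹) = orderOf a := by
  have h : SemiconjBy c a (c * a * c⁻¹) := by
    unfold SemiconjBy; group
  exact (h.orderOf_eq c).symm

private lemma ncl_conj {G : Type*} [Group G] (x c : G) :
    Subgroup.normalClosure ({c * x * c⁻¹} : Set G) =
      Subgroup.normalClosure ({x} : Set G) := by
  apply le_antisymm
  · apply Subgroup.normalClosure_le_normal
    simp only [Set.singleton_subset_iff, SetLike.mem_coe]
    exact Subgroup.normalClosure_normal.conj_mem x (Subgroup.subset_normalClosure (s := ({x} : Set G)) (Set.mem_singleton x)) c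
  · apply Subgroup.normalClosure_le_normal
    simp only [Set.singleton_subset_iff, SetLike.mem_coe]
    have h := Subgroup.normalClosure_normal.conj_mem (c * x * c⁻¹)
      (Subgroup.subset_normalClosure (s := ({c * x * c⁻¹} : Set G))
        (Set.mem_singleton _)) c⁻¹
    have h2 : c⁻¹ * (c * x * c⁻¹) * c⁻¹⁻¹ = x := by group
    rwa [h2] at h


theorem stmt3 {G : Type*} [Group G] (p n : ℕ) (hp : p.Prime) (hn : 0 < n)
    (hno : ∀ x : G, IsLeftThreeEngel x → orderOf x = p →
      ∀ y ∈ Subgroup.normalClosure ({x} : Set G), orderOf y ≠ p ^ (n + 1))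
    (hnilp : ∀ x : G, IsLeftThreeEngel x → orderOf x = p →
      ∀ g ∈ Subgroup.normalClosure ({x} : Set G), orderOf g ∣ p ^ n →
        Group.IsNilpotent
          ↥(Subgroup.closure {y : G | ∃ i < p ^ n, y = (g ^ i)⁻¹ * x * g ^ i})) :
    ∀ x : G, IsLeftThreeEngel x → orderOf x = p →
      ∀ y ∈ Subgroup.normalClosure ({x} : Set G), orderOf y ∣ p ^ n := by
  intro x hx hxo y hy
  have key : ∀ l : List G, (∀ e ∈ l, e ∈ conjugatesOf x ∨ e⁻¹ ∈ conjugatesOf x) →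
      l.prod ∈ Subgroup.normalClosure ({x} : Set G) ∧ orderOf l.prod ∣ p ^ n := by
    intro l
    induction l with
    | nil => intro _; exact ⟨one_mem _, by simp⟩
    | cons e l ih =>
      intro hel
      obtain ⟨hmem, hdvd⟩ := ih (fun e' he' => hel e' (List.mem_cons_of_mem _ he'))
      obtain ⟨x', hcx', he⟩ : ∃ x', x' ∈ conjugatesOf x ∧ (e = x' ∨ e = x'⁻¹) := by
        rcases hel e List.mem_cons_self with hc | hc
        · exact ⟨e, hc, Or.inl rfl⟩
        · exact ⟨e⁻¹, hc, Or.inr (inv_inv e).symm⟩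
      obtain ⟨c, hc'⟩ := isConj_iff.mp (hcx' : IsConj x x')
      have hx' : IsLeftThreeEngel x' := hc' ▸ engel_conj hx c
      have hxo' : orderOf x' = p := by rw [← hc', orderOf_conj', hxo]
      have hncl : Subgroup.normalClosure ({x'} : Set G) =
          Subgroup.normalClosure ({x} : Set G) := by rw [← hc', ncl_conj]
      have hx'mem : x' ∈ Subgroup.normalClosure ({x} : Set G) := by
        rw [← hncl]; exact Subgroup.subset_normalClosure (s := ({x'} : Set G)) (Set.mem_singleton x')
      have hemem : e ∈ Subgroup.normalClosure ({x} : Set G) := by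
        rcases he with rfl | rfl
        · exact hx'mem
        · exact inv_mem hx'mem
      have hmem' : l.prod ∈ Subgroup.normalClosure ({x'} : Set G) := hncl ▸ hmem
      have hnil := hnilp x' hx' hxo' l.prod hmem' hdvd
      have hno' : ∀ z ∈ Subgroup.normalClosure ({x'} : Set G),
          orderOf z ≠ p ^ (n + 1) := fun z hz => hno x hx hxo z (hncl ▸ hz)
      have hstep := step_lemma p n hp x' hxo' l.prod hmem' hdvd hnil hno' e he
      rw [List.prod_cons]
      exact ⟨mul_mem hemem hmem, hstep⟩
  -- decompose y as a product of conjugates of x and their inverses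
  have h1 : y ∈ (Subgroup.closure (Group.conjugatesOfSet ({x} : Set G))).toSubmonoid := hy
  rw [Subgroup.closure_toSubmonoid] at h1
  obtain ⟨l, hl, hlp⟩ := Submonoid.exists_list_of_mem_closure h1
  rw [← hlp]
  refine (key l ?_).2
  intro e hel
  rcases hl e hel with h | h
  · left
    simpa [Group.conjugatesOfSet] using h
  · right
    rw [Set.mem_inv] at h
    simpa [Group.conjugatesOfSet] using h
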